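/- arXiv:2102.03509 — 3 statements merged into one kernel-verified Lean document; each statement's English description precedes it below -/
import Mathlib

section
/- If the coefficients α₀ < α₁ < ... < αₙ are strictly increasing and x is a real number with (α₀ - x)(αₙ - x) < 0, then the equation Bₙ(z) = x has a unique solution z in the open interval (0,1). -/
noncomputable def bernsteinPoly (n : ℕ) (α : ℕ → ℝ) (x : ℝ) : ℝ :=
  ∑ k ∈ Finset.range (n + 1), α k * (n.choose k : ℝ) * x ^ k * (1 - x) ^ (n - k)

lemma bernsteinPoly_rec (n : ℕ) (α : ℕ → ℝ) (z : ℝ) :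
    bernsteinPoly (n + 1) α z
      = (1 - z) * bernsteinPoly n α z + z * bernsteinPoly n (fun k => α (k + 1)) z := by
  unfold bernsteinPoly
  rw [Finset.sum_range_succ'
    (fun k => α k * ((n + 1).choose k : ℝ) * z ^ k * (1 - z) ^ (n + 1 - k))]
  have key : ∀ k ∈ Finset.range (n + 1),
      α (k + 1) * ((n + 1).choose (k + 1) : ℝ) * z ^ (k + 1) * (1 - z) ^ (n + 1 - (k + 1))
        = z * (α (k + 1) * (n.choose k : ℝ) * z ^ k * (1 - z) ^ (n - k))
          + α (k + 1) * (n.choose (k + 1) : ℝ) * z ^ (k + 1) * (1 - z) ^ (n + 1 - (k + 1)) := by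
    intro k hk
    have hp : ((n + 1).choose (k + 1) : ℝ) = n.choose k + n.choose (k + 1) := by
      rw [Nat.choose_succ_succ]; push_cast; ring
    rw [hp, Nat.succ_sub_succ]
    ring
  rw [Finset.sum_congr rfl key, Finset.sum_add_distrib, ← Finset.mul_sum]
  have h2 : (∑ k ∈ Finset.range (n + 1),
        α (k + 1) * (n.choose (k + 1) : ℝ) * z ^ (k + 1) * (1 - z) ^ (n + 1 - (k + 1)))
        + α 0 * ((n + 1).choose 0 : ℝ) * z ^ 0 * (1 - z) ^ (n + 1 - 0)
      = ∑ k ∈ Finset.range (n + 2),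
          α k * (n.choose k : ℝ) * z ^ k * (1 - z) ^ (n + 1 - k) := by
    rw [Finset.sum_range_succ'
      (fun k => α k * (n.choose k : ℝ) * z ^ k * (1 - z) ^ (n + 1 - k)) (n + 1)]
    norm_num
  have h3 : (∑ k ∈ Finset.range (n + 2),
        α k * (n.choose k : ℝ) * z ^ k * (1 - z) ^ (n + 1 - k))
      = (1 - z) * ∑ k ∈ Finset.range (n + 1),
          α k * (n.choose k : ℝ) * z ^ k * (1 - z) ^ (n - k) := by
    rw [Finset.sum_range_succ, Nat.choose_succ_self, Finset.mul_sum]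
    simp only [Nat.cast_zero, mul_zero, zero_mul, add_zero]
    apply Finset.sum_congr rfl
    intro k hk
    have hkn : k ≤ n := by simp at hk; omega
    have : n + 1 - k = (n - k) + 1 := by omega
    rw [this, pow_succ]
    ring
  rw [add_assoc, h2, h3]
  ring

lemma bernsteinPoly_zero_eval (n : ℕ) (α : ℕ → ℝ) : bernsteinPoly n α 0 = α 0 := by
  unfold bernsteinPoly
  rw [Finset.sum_eq_single 0]
  · simp
  · intro k _ hk
    simp [zero_pow hk]
  · intro h; simp at h

lemma bernsteinPoly_one_eval (n : ℕ) (α : ℕ → ℝ) : bernsteinPoly n α 1 = α n := by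
  unfold bernsteinPoly
  rw [Finset.sum_eq_single n]
  · simp
  · intro k hk hkn
    have h : n - k ≠ 0 := by simp at hk; omega
    simp [zero_pow h]
  · intro h; simp at h

lemma bernsteinPoly_mono_coeff (n : ℕ) (α β : ℕ → ℝ) (h : ∀ k, k ≤ n → α k ≤ β k)
    {z : ℝ} (hz : z ∈ Set.Icc (0:ℝ) 1) :
    bernsteinPoly n α z ≤ bernsteinPoly n β z := by
  unfold bernsteinPoly
  apply Finset.sum_le_sum
  intro k hk
  have hz0 : (0:ℝ) ≤ z := hz.1
  have hz1 : (0:ℝ) ≤ 1 - z := by linarith [hz.2]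
  have hfac : (0:ℝ) ≤ (n.choose k : ℝ) * z ^ k * (1 - z) ^ (n - k) := by positivity
  have := h k (by simp at hk; omega)
  calc α k * (n.choose k : ℝ) * z ^ k * (1 - z) ^ (n - k)
      = α k * ((n.choose k : ℝ) * z ^ k * (1 - z) ^ (n - k)) := by ring
    _ ≤ β k * ((n.choose k : ℝ) * z ^ k * (1 - z) ^ (n - k)) := by
        exact mul_le_mul_of_nonneg_right this hfac
    _ = β k * (n.choose k : ℝ) * z ^ k * (1 - z) ^ (n - k) := by ring

lemma bernsteinPoly_strictMonoOn (n : ℕ) (α : ℕ → ℝ)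
    (hα : ∀ k, k < n + 1 → α k < α (k + 1)) :
    StrictMonoOn (bernsteinPoly (n + 1) α) (Set.Icc (0:ℝ) 1) := by
  induction n generalizing α with
  | zero =>
    intro a ha b hb hab
    have key : ∀ t : ℝ, bernsteinPoly 1 α t = α 0 + t * (α 1 - α 0) := by
      intro t
      unfold bernsteinPoly
      simp [Finset.sum_range_succ]
      ring
    rw [key, key]
    have := hα 0 (by omega)
    nlinarith
  | succ m ih =>
    intro a ha b hb hab
    rw [bernsteinPoly_rec (m + 1) α a, bernsteinPoly_rec (m + 1) α b]
    have hA : StrictMonoOn (bernsteinPoly (m + 1) α) (Set.Icc (0:ℝ) 1) :=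
      ih α (fun k hk => hα k (by omega))
    have hC : StrictMonoOn (bernsteinPoly (m + 1) (fun k => α (k + 1))) (Set.Icc (0:ℝ) 1) :=
      ih _ (fun k hk => hα (k + 1) (by omega))
    have hAC : bernsteinPoly (m + 1) α a ≤ bernsteinPoly (m + 1) (fun k => α (k + 1)) a :=
      bernsteinPoly_mono_coeff _ _ _ (fun k hk => (hα k (by omega)).le) ha
    have h1 : bernsteinPoly (m + 1) α a ≤ bernsteinPoly (m + 1) α b := (hA ha hb hab).le
    have h2 : bernsteinPoly (m + 1) (fun k => α (k + 1)) a
        < bernsteinPoly (m + 1) (fun k => α (k + 1)) b := hC ha hb hab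
    have hb0 : 0 < b := lt_of_le_of_lt ha.1 hab
    have hb1 : b ≤ 1 := hb.2
    nlinarith

lemma bernsteinPoly_continuous (n : ℕ) (α : ℕ → ℝ) : Continuous (bernsteinPoly n α) := by
  unfold bernsteinPoly
  fun_prop

theorem bernsteinPoly_unique_root (n : ℕ) (α : ℕ → ℝ)
    (hα : ∀ k, k < n → α k < α (k + 1)) (x : ℝ)
    (hx : (α 0 - x) * (α n - x) < 0) :
    ∃! z, z ∈ Set.Ioo (0 : ℝ) 1 ∧ bernsteinPoly n α z = x := by
  obtain ⟨m, rfl⟩ : ∃ m, n = m + 1 := by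
    rcases n with _ | m
    · exact absurd hx (by nlinarith [mul_self_nonneg (α 0 - x)])
    · exact ⟨m, rfl⟩
  set n := m + 1
  have hmono := bernsteinPoly_strictMonoOn m α (fun k hk => hα k hk)
  have h01 : (0:ℝ) ∈ Set.Icc (0:ℝ) 1 := by norm_num
  have h11 : (1:ℝ) ∈ Set.Icc (0:ℝ) 1 := by norm_num
  have hαn : α 0 < α n := by
    have := hmono h01 h11 (by norm_num)
    rwa [bernsteinPoly_zero_eval, bernsteinPoly_one_eval] at this
  have hxin : α 0 < x ∧ x < α n := by
    rcases mul_neg_iff.mp hx with ⟨h1, h2⟩ | ⟨h1, h2⟩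
    · exfalso; linarith
    · exact ⟨by linarith, by linarith⟩
  -- existence
  have hIVT := intermediate_value_Ioo (le_of_lt one_pos)
    ((bernsteinPoly_continuous n α).continuousOn (s := Set.Icc 0 1))
  have hxmem : x ∈ Set.Ioo (bernsteinPoly n α 0) (bernsteinPoly n α 1) := by
    rw [bernsteinPoly_zero_eval, bernsteinPoly_one_eval]; exact ⟨hxin.1, hxin.2⟩
  obtain ⟨z, hz, hzx⟩ := hIVT hxmem
  refine ⟨z, ⟨hz, hzx⟩, ?_⟩
  rintro w ⟨hw, hwx⟩
  have : bernsteinPoly n α w = bernsteinPoly n α z := by rw [hwx, hzx]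
  exact hmono.injOn (Set.Ioo_subset_Icc_self hw) (Set.Ioo_subset_Icc_self hz) this
end

section
/- Let f : [0,1] → ℝ be twice continuously differentiable. Then for each fixed x ∈ [0,1], n·(Bₙ(f)(x) − f(x)) converges to x(1−x)·f''(x)/2 as n → ∞ (Voronovskaya's theorem). -/
open Finset Filter



lemma descFac_choose (j k n : ℕ) (hjk : j ≤ k) (hkn : k ≤ n) :
    k.descFactorial j * n.choose k = n.descFactorial j * (n - j).choose (k - j) := by
  rw [Nat.descFactorial_eq_factorial_mul_choose, Nat.descFactorial_eq_factorial_mul_choose,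
    mul_assoc, mul_comm (k.choose j), Nat.choose_mul hjk, mul_assoc]

lemma cast_descFac (j k : ℕ) :
    (k.descFactorial j : ℝ) = ∏ i ∈ range j, ((k : ℝ) - i) := by
  induction j with
  | zero => simp
  | succ j ih =>
    rw [Nat.descFactorial_succ, prod_range_succ, ← ih]
    rcases le_or_gt (j+1) k with h | h
    · rw [Nat.cast_mul, Nat.cast_sub (by omega), mul_comm]
    · rcases Nat.lt_succ_iff_lt_or_eq.mp h with h' | rfl
      · rw [Nat.descFactorial_eq_zero_iff_lt.2 h']
        simp
      · simp

lemma moment (n j : ℕ) (hj : j ≤ n) (x y : ℝ) :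
    ∑ k ∈ range (n + 1), (k.descFactorial j : ℝ) * n.choose k * x ^ k * y ^ (n - k)
      = (n.descFactorial j : ℝ) * x ^ j * (x + y) ^ (n - j) := by
  rw [range_eq_Ico, ← Finset.sum_Ico_consecutive _ (Nat.zero_le j) (by omega)]
  have h1 : ∑ k ∈ Finset.Ico 0 j, (k.descFactorial j : ℝ) * n.choose k * x ^ k * y ^ (n - k) = 0 := by
    apply Finset.sum_eq_zero
    intro k hk
    simp only [Finset.mem_Ico] at hk
    rw [Nat.descFactorial_eq_zero_iff_lt.2 hk.2]
    simp
  rw [h1, zero_add, Finset.sum_Ico_eq_sum_range]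
  have h2 : ∀ i ∈ range (n + 1 - j), ((j + i).descFactorial j : ℝ) * n.choose (j + i) * x ^ (j + i) * y ^ (n - (j + i))
      = ((n.descFactorial j : ℝ) * x ^ j) * (((n - j).choose i : ℝ) * x ^ i * y ^ (n - j - i)) := by
    intro i hi
    simp only [mem_range] at hi
    have hkn : j + i ≤ n := by omega
    have key := descFac_choose j (j + i) n (by omega) hkn
    rw [Nat.add_sub_cancel_left] at key
    have : ((j + i).descFactorial j : ℝ) * n.choose (j + i) = (n.descFactorial j : ℝ) * (n - j).choose i := by
      exact_mod_cast congrArg (Nat.cast : ℕ → ℝ) key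
    calc ((j + i).descFactorial j : ℝ) * n.choose (j + i) * x ^ (j + i) * y ^ (n - (j + i))
        = (((j + i).descFactorial j : ℝ) * n.choose (j + i)) * (x ^ j * x ^ i) * y ^ (n - j - i) := by
          rw [pow_add]; ring_nf; rw [Nat.sub_add_eq]
      _ = ((n.descFactorial j : ℝ) * x ^ j) * (((n - j).choose i : ℝ) * x ^ i * y ^ (n - j - i)) := by
          rw [this]; ring
  rw [Finset.sum_congr rfl h2, ← Finset.mul_sum]
  congr 1
  have hrange : n + 1 - j = (n - j) + 1 := by omega
  rw [hrange, add_pow]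
  apply Finset.sum_congr rfl
  intro i hi
  simp only [mem_range] at hi
  ring

lemma Ssum (n j : ℕ) (hj : j ≤ n) (x : ℝ) :
    ∑ k ∈ range (n + 1), (k.descFactorial j : ℝ) * ((n.choose k : ℝ) * x ^ k * (1 - x) ^ (n - k))
      = (n.descFactorial j : ℝ) * x ^ j := by
  have h := moment n j hj x (1 - x)
  have hx1 : x + (1 - x) = 1 := by ring
  rw [hx1, one_pow, mul_one] at h
  rw [← h]
  exact Finset.sum_congr rfl fun k _ => by ring

lemma sum_one (n : ℕ) (x : ℝ) :
    ∑ k ∈ range (n + 1), (n.choose k : ℝ) * x ^ k * (1 - x) ^ (n - k) = 1 := by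
  have h := Ssum n 0 (Nat.zero_le n) x
  simp only [Nat.descFactorial_zero, Nat.cast_one, one_mul, pow_zero, mul_one] at h
  exact h

lemma central_one (n : ℕ) (hn : 1 ≤ n) (x : ℝ) :
    ∑ k ∈ range (n + 1), ((k : ℝ) - n * x) * ((n.choose k : ℝ) * x ^ k * (1 - x) ^ (n - k))
      = 0 := by
  have S0 := Ssum n 0 (Nat.zero_le n) x
  have S1 := Ssum n 1 hn x
  simp only [cast_descFac, Finset.prod_range_succ, Finset.prod_range_zero, one_mul,
    Nat.cast_zero, sub_zero, pow_one, pow_zero, mul_one] at S0 S1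
  have key : ∀ k ∈ range (n + 1), ((k : ℝ) - n * x) * ((n.choose k : ℝ) * x ^ k * (1 - x) ^ (n - k))
      = (k : ℝ) * ((n.choose k : ℝ) * x ^ k * (1 - x) ^ (n - k))
        + (-((n:ℝ)*x)) * ((n.choose k : ℝ) * x ^ k * (1 - x) ^ (n - k)) := fun k _ => by ring
  rw [Finset.sum_congr rfl key, Finset.sum_add_distrib, ← Finset.mul_sum, S1, S0]
  ring

lemma central_two (n : ℕ) (hn : 2 ≤ n) (x : ℝ) :
    ∑ k ∈ range (n + 1), ((k : ℝ) - n * x) ^ 2 * ((n.choose k : ℝ) * x ^ k * (1 - x) ^ (n - k))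
      = n * x * (1 - x) := by
  have S0 := Ssum n 0 (Nat.zero_le n) x
  have S1 := Ssum n 1 (by omega) x
  have S2 := Ssum n 2 hn x
  simp only [cast_descFac, Finset.prod_range_succ, Finset.prod_range_zero, one_mul,
    Nat.cast_zero, Nat.cast_one, sub_zero, pow_one, pow_zero, mul_one] at S0 S1 S2
  have key : ∀ k ∈ range (n + 1), ((k : ℝ) - n * x) ^ 2 * ((n.choose k : ℝ) * x ^ k * (1 - x) ^ (n - k))
      = ((k:ℝ) * ((k:ℝ) - 1)) * ((n.choose k : ℝ) * x ^ k * (1 - x) ^ (n - k))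
        + (1 - 2*(n:ℝ)*x) * ((k : ℝ) * ((n.choose k : ℝ) * x ^ k * (1 - x) ^ (n - k)))
        + ((n:ℝ)*x)^2 * ((n.choose k : ℝ) * x ^ k * (1 - x) ^ (n - k)) := fun k _ => by ring
  rw [Finset.sum_congr rfl key, Finset.sum_add_distrib, Finset.sum_add_distrib,
    ← Finset.mul_sum, ← Finset.mul_sum, S2, S1, S0]
  ring

lemma central_four (n : ℕ) (hn : 4 ≤ n) (x : ℝ) :
    ∑ k ∈ range (n + 1), ((k : ℝ) - n * x) ^ 4 * ((n.choose k : ℝ) * x ^ k * (1 - x) ^ (n - k))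
      = n * x * (1 - x) * (1 + 3 * ((n:ℝ) - 2) * x * (1 - x)) := by
  have S0 := Ssum n 0 (Nat.zero_le n) x
  have S1 := Ssum n 1 (by omega) x
  have S2 := Ssum n 2 (by omega) x
  have S3 := Ssum n 3 (by omega) x
  have S4 := Ssum n 4 hn x
  simp only [cast_descFac, Finset.prod_range_succ, Finset.prod_range_zero, one_mul,
    Nat.cast_zero, Nat.cast_one, Nat.cast_ofNat, sub_zero, pow_one, pow_zero, mul_one]
    at S0 S1 S2 S3 S4
  have key : ∀ k ∈ range (n + 1), ((k : ℝ) - n * x) ^ 4 * ((n.choose k : ℝ) * x ^ k * (1 - x) ^ (n - k))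
      = ((k:ℝ) * ((k:ℝ) - 1) * ((k:ℝ) - 2) * ((k:ℝ) - 3)) * ((n.choose k : ℝ) * x ^ k * (1 - x) ^ (n - k))
        + (6 - 4*(n:ℝ)*x) * (((k:ℝ) * ((k:ℝ) - 1) * ((k:ℝ) - 2)) * ((n.choose k : ℝ) * x ^ k * (1 - x) ^ (n - k)))
        + (7 - 12*(n:ℝ)*x + 6*((n:ℝ)*x)^2) * (((k:ℝ) * ((k:ℝ) - 1)) * ((n.choose k : ℝ) * x ^ k * (1 - x) ^ (n - k)))
        + (1 - 4*(n:ℝ)*x + 6*((n:ℝ)*x)^2 - 4*((n:ℝ)*x)^3) * ((k : ℝ) * ((n.choose k : ℝ) * x ^ k * (1 - x) ^ (n - k)))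
        + ((n:ℝ)*x)^4 * ((n.choose k : ℝ) * x ^ k * (1 - x) ^ (n - k)) := fun k _ => by ring
  rw [Finset.sum_congr rfl key, Finset.sum_add_distrib, Finset.sum_add_distrib,
    Finset.sum_add_distrib, Finset.sum_add_distrib,
    ← Finset.mul_sum, ← Finset.mul_sum, ← Finset.mul_sum, ← Finset.mul_sum,
    S4, S3, S2, S1, S0]
  ring

lemma central_one' (n : ℕ) (hn : 1 ≤ n) (x : ℝ) :
    ∑ k ∈ range (n + 1), ((k : ℝ) / n - x) * ((n.choose k : ℝ) * x ^ k * (1 - x) ^ (n - k)) = 0 := by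
  have hn0 : (n : ℝ) ≠ 0 := Nat.cast_ne_zero.2 (by omega)
  have h := central_one n hn x
  calc ∑ k ∈ range (n + 1), ((k : ℝ) / n - x) * ((n.choose k : ℝ) * x ^ k * (1 - x) ^ (n - k))
      = ∑ k ∈ range (n + 1), (1 / n) * (((k : ℝ) - n * x) * ((n.choose k : ℝ) * x ^ k * (1 - x) ^ (n - k))) := by
        refine Finset.sum_congr rfl fun k _ => ?_
        field_simp
    _ = 0 := by rw [← Finset.mul_sum, h, mul_zero]


lemma central_two' (n : ℕ) (hn : 2 ≤ n) (x : ℝ) :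
    ∑ k ∈ range (n + 1), ((k : ℝ) / n - x) ^ 2 * ((n.choose k : ℝ) * x ^ k * (1 - x) ^ (n - k))
      = x * (1 - x) / n := by
  have hn0 : (n : ℝ) ≠ 0 := Nat.cast_ne_zero.2 (by omega)
  have h := central_two n hn x
  calc ∑ k ∈ range (n + 1), ((k : ℝ) / n - x) ^ 2 * ((n.choose k : ℝ) * x ^ k * (1 - x) ^ (n - k))
      = ∑ k ∈ range (n + 1), (1 / (n:ℝ) ^ 2) * (((k : ℝ) - n * x) ^ 2 * ((n.choose k : ℝ) * x ^ k * (1 - x) ^ (n - k))) := by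
        refine Finset.sum_congr rfl fun k _ => ?_
        field_simp
    _ = (1 / (n:ℝ) ^ 2) * (n * x * (1 - x)) := by rw [← Finset.mul_sum, h]
    _ = x * (1 - x) / n := by field_simp


lemma central_four_le (n : ℕ) (hn : 4 ≤ n) (x : ℝ) (hx0 : 0 ≤ x) (hx1 : x ≤ 1) :
    ∑ k ∈ range (n + 1), ((k : ℝ) / n - x) ^ 4 * ((n.choose k : ℝ) * x ^ k * (1 - x) ^ (n - k))
      ≤ 1 / (n : ℝ) ^ 2 := by
  have hn0 : (0:ℝ) < (n : ℝ) := by exact_mod_cast (by omega : 0 < n)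
  have hn0' : (n : ℝ) ≠ 0 := ne_of_gt hn0
  have h := central_four n hn x
  have heq : ∑ k ∈ range (n + 1), ((k : ℝ) / n - x) ^ 4 * ((n.choose k : ℝ) * x ^ k * (1 - x) ^ (n - k))
      = (1 / (n:ℝ) ^ 4) * ∑ k ∈ range (n + 1), ((k : ℝ) - n * x) ^ 4 * ((n.choose k : ℝ) * x ^ k * (1 - x) ^ (n - k)) := by
    rw [Finset.mul_sum]
    refine Finset.sum_congr rfl fun k _ => ?_
    field_simp
  rw [heq, h]
  have hn4 : (4:ℝ) ≤ (n:ℝ) := by exact_mod_cast hn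
  set t := x * (1 - x) with ht
  have ht0 : 0 ≤ t := mul_nonneg hx0 (by linarith)
  have ht4 : t ≤ 1 / 4 := by nlinarith [sq_nonneg (1 - 2 * x)]
  have ht2 : t ^ 2 ≤ 1 / 16 := by nlinarith
  have hb : (n:ℝ) * x * (1 - x) * (1 + 3 * ((n:ℝ) - 2) * x * (1 - x)) ≤ (n:ℝ) ^ 2 := by
    have hexp : (n:ℝ) * x * (1 - x) * (1 + 3 * ((n:ℝ) - 2) * x * (1 - x))
        = (n:ℝ) * t + 3 * (n:ℝ) ^ 2 * t ^ 2 - 6 * (n:ℝ) * t ^ 2 := by rw [ht]; ring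
    rw [hexp]
    have h1 : (n:ℝ) * t ≤ (n:ℝ) * (1/4) := mul_le_mul_of_nonneg_left ht4 (le_of_lt hn0)
    have h2 : 3 * (n:ℝ)^2 * t^2 ≤ 3 * (n:ℝ)^2 * (1/16) := by nlinarith [sq_nonneg (n:ℝ)]
    have h3 : 0 ≤ 6 * (n:ℝ) * t^2 := by positivity
    nlinarith
  calc (1 / (n:ℝ) ^ 4) * ((n:ℝ) * x * (1 - x) * (1 + 3 * ((n:ℝ) - 2) * x * (1 - x)))
      ≤ (1 / (n:ℝ) ^ 4) * (n:ℝ) ^ 2 := mul_le_mul_of_nonneg_left hb (by positivity)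
    _ = 1 / (n:ℝ) ^ 2 := by field_simp


lemma taylor_bound (f : ℝ → ℝ) (hf : ContDiff ℝ 2 f) (x : ℝ) (s : Set ℝ) (hs : Convex ℝ s)
    (hxs : x ∈ s) (c : ℝ) (hc : ∀ ξ ∈ s, |deriv (deriv f) ξ - deriv (deriv f) x| ≤ c)
    (t : ℝ) (hts : t ∈ s) :
    |f t - f x - deriv f x * (t - x) - deriv (deriv f) x / 2 * (t - x) ^ 2|
      ≤ c * (t - x) ^ 2 := by
  have h2 : ContDiff ℝ (1 + 1) f := by norm_num; exact hf
  rw [contDiff_succ_iff_deriv] at h2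
  have hd1 : Differentiable ℝ f := h2.1
  have hd2 : Differentiable ℝ (deriv f) := (contDiff_one_iff_deriv.mp h2.2.2).1
  set f' := deriv f
  set f'' := deriv (deriv f)
  set E' : ℝ → ℝ := fun s => f' s - f' x - f'' x * (s - x) with hE'
  set E : ℝ → ℝ := fun t => f t - f x - f' x * (t - x) - f'' x / 2 * (t - x) ^ 2 with hE
  have hE'deriv : ∀ z, HasDerivAt E' (f'' z - f'' x) z := by
    intro z
    have h := (((hd2 z).hasDerivAt).sub_const (f' x)).sub
      (((hasDerivAt_id z).sub_const x).const_mul (f'' x))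
    rw [mul_one] at h
    exact h
  have hEderiv : ∀ z, HasDerivAt E (E' z) z := by
    intro z
    have h := ((((hd1 z).hasDerivAt).sub_const (f x)).sub
      (((hasDerivAt_id z).sub_const x).const_mul (f' x))).sub
      ((((hasDerivAt_id z).sub_const x).pow 2).const_mul (f'' x / 2))
    exact h.congr_deriv (by show _ = f' z - f' x - f'' x * (z - x); norm_num; ring)
  have step1 : ∀ z ∈ s, |E' z| ≤ c * |z - x| := by
    intro z hz
    have := hs.norm_image_sub_le_of_norm_hasDerivWithin_le
      (f' := fun z => f'' z - f'' x)
      (fun u hu => (hE'deriv u).hasDerivWithinAt)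
      (fun u hu => by simpa [Real.norm_eq_abs] using hc u hu) hxs hz
    simpa [Real.norm_eq_abs, hE'] using this
  have hsub : Set.uIcc x t ⊆ s := (hs.ordConnected).uIcc_subset hxs hts
  have step2 : ∀ z ∈ Set.uIcc x t, ‖E' z‖ ≤ c * |t - x| := by
    intro z hz
    have h1 := step1 z (hsub hz)
    have h2 : |z - x| ≤ |t - x| := by
      rw [Set.uIcc_eq_union] at hz
      rcases hz with hz | hz <;> rw [Set.mem_Icc] at hz <;> rw [abs_le] <;>
        constructor <;> [skip; skip; skip; skip] <;> cases abs_cases (t - x) <;> nlinarith [hz.1, hz.2]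
    have hc0 : 0 ≤ c := le_trans (abs_nonneg _) (hc x hxs)
    calc ‖E' z‖ = |E' z| := rfl
      _ ≤ c * |z - x| := h1
      _ ≤ c * |t - x| := by exact mul_le_mul_of_nonneg_left h2 hc0
  have := (convex_uIcc x t).norm_image_sub_le_of_norm_hasDerivWithin_le
      (f' := E') (fun u hu => (hEderiv u).hasDerivWithinAt) step2
      (Set.left_mem_uIcc) (Set.right_mem_uIcc)
  have hEx : E x = 0 := by simp [hE]
  rw [hEx, sub_zero] at this
  calc |E t| ≤ c * |t - x| * ‖t - x‖ := this
    _ = c * (t - x) ^ 2 := by rw [Real.norm_eq_abs, mul_assoc, abs_mul_abs_self, sq]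



noncomputable def bernsteinApprox (f : ℝ → ℝ) (n : ℕ) (x : ℝ) : ℝ :=
  ∑ k ∈ Finset.range (n + 1),
    f ((k : ℝ) / n) * (n.choose k : ℝ) * x ^ k * (1 - x) ^ (n - k)



/-- Voronovskaya's theorem. -/
theorem voronovskaya (f : ℝ → ℝ) (hf : ContDiff ℝ 2 f)
    (x : ℝ) (hx : x ∈ Set.Icc (0 : ℝ) 1) :
    Filter.Tendsto (fun n : ℕ => (n : ℝ) * (bernsteinApprox f n x - f x))
      Filter.atTop (nhds (x * (1 - x) * deriv (deriv f) x / 2)) := by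
  obtain ⟨hx0, hx1⟩ := hx
  set E : ℝ → ℝ := fun t =>
    f t - f x - deriv f x * (t - x) - deriv (deriv f) x / 2 * (t - x) ^ 2 with hE
  set R : ℕ → ℝ := fun n =>
    (n : ℝ) * ∑ k ∈ range (n + 1),
      E ((k : ℝ) / n) * ((n.choose k : ℝ) * x ^ k * (1 - x) ^ (n - k)) with hRdef
  have hdecomp : ∀ n : ℕ, 4 ≤ n → (n : ℝ) * (bernsteinApprox f n x - f x)
      = x * (1 - x) * deriv (deriv f) x / 2 + R n := by
    intro n hn
    have hn0 : (n : ℝ) ≠ 0 := Nat.cast_ne_zero.2 (by omega)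
    have h1 := central_one' n (by omega) x
    have h2 := central_two' n (by omega) x
    have hsum := sum_one n x
    have hB : bernsteinApprox f n x
        = ∑ k ∈ range (n + 1), f ((k : ℝ) / n) * ((n.choose k : ℝ) * x ^ k * (1 - x) ^ (n - k)) := by
      unfold bernsteinApprox
      exact Finset.sum_congr rfl fun k _ => by ring
    have key : ∀ k ∈ range (n + 1),
        f ((k : ℝ) / n) * ((n.choose k : ℝ) * x ^ k * (1 - x) ^ (n - k))
        = f x * ((n.choose k : ℝ) * x ^ k * (1 - x) ^ (n - k))
          + deriv f x * (((k : ℝ) / n - x) * ((n.choose k : ℝ) * x ^ k * (1 - x) ^ (n - k)))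
          + (deriv (deriv f) x / 2)
              * (((k : ℝ) / n - x) ^ 2 * ((n.choose k : ℝ) * x ^ k * (1 - x) ^ (n - k)))
          + E ((k : ℝ) / n) * ((n.choose k : ℝ) * x ^ k * (1 - x) ^ (n - k)) := by
      intro k _
      simp only [hE]
      ring
    rw [hRdef]
    simp only
    rw [hB, Finset.sum_congr rfl key, Finset.sum_add_distrib, Finset.sum_add_distrib,
      Finset.sum_add_distrib, ← Finset.mul_sum, ← Finset.mul_sum, ← Finset.mul_sum,
      hsum, h1, h2]
    field_simp
    ring
  have hR : Tendsto R atTop (nhds 0) := by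
    rw [NormedAddCommGroup.tendsto_nhds_zero]
    intro ε hε
    -- continuity of second derivative
    have h2 : ContDiff ℝ (1 + 1) f := by rw [one_add_one_eq_two]; exact hf
    rw [contDiff_succ_iff_deriv] at h2
    have hcont : Continuous (deriv (deriv f)) := (contDiff_one_iff_deriv.mp h2.2.2).2
    obtain ⟨M0, hM0⟩ : ∃ M0, ∀ ξ ∈ Set.Icc (0:ℝ) 1, ‖deriv (deriv f) ξ‖ ≤ M0 :=
      isCompact_Icc.exists_bound_of_continuousOn hcont.continuousOn
    have hM0' : ∀ ξ ∈ Set.Icc (0:ℝ) 1, |deriv (deriv f) ξ| ≤ M0 := by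
      intro ξ hξ; simpa [Real.norm_eq_abs] using hM0 ξ hξ
    have hM0pos : 0 ≤ M0 := le_trans (abs_nonneg _) (hM0' 0 (by norm_num))
    obtain ⟨δ, hδpos, hδ⟩ : ∃ δ > 0, ∀ ξ, |ξ - x| < δ →
        |deriv (deriv f) ξ - deriv (deriv f) x| ≤ ε / 4 := by
      obtain ⟨δ, hδpos, h⟩ := Metric.continuousAt_iff.mp hcont.continuousAt (ε / 4) (by positivity)
      exact ⟨δ, hδpos, fun ξ hξ => le_of_lt (by
        simpa [Real.dist_eq] using h (show dist ξ x < δ by rwa [Real.dist_eq]))⟩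
    set C := 2 * M0 / δ ^ 2 with hC
    have hC0 : 0 ≤ C := by positivity
    have hEb : ∀ t ∈ Set.Icc (0:ℝ) 1,
        |E t| ≤ ε / 4 * (t - x) ^ 2 + C * (t - x) ^ 4 := by
      intro t ht
      rcases lt_or_ge |t - x| δ with hlt | hge
      · have h := taylor_bound f hf x (Metric.ball x δ) (convex_ball x δ)
          (Metric.mem_ball_self hδpos) (ε / 4)
          (fun ξ hξ => hδ ξ (by simpa [Real.dist_eq] using Metric.mem_ball.mp hξ))
          t (by simpa [Metric.mem_ball, Real.dist_eq] using hlt)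
        have h0 : 0 ≤ C * (t - x) ^ 4 := by positivity
        calc |E t| ≤ ε / 4 * (t - x) ^ 2 := h
          _ ≤ _ := by linarith
      · have h := taylor_bound f hf x (Set.Icc 0 1) (convex_Icc 0 1) ⟨hx0, hx1⟩ (2 * M0)
          (fun ξ hξ => by
            have h1 := hM0' ξ hξ
            have h2 := hM0' x ⟨hx0, hx1⟩
            calc |deriv (deriv f) ξ - deriv (deriv f) x|
                ≤ |deriv (deriv f) ξ| + |deriv (deriv f) x| := abs_sub _ _
              _ ≤ 2 * M0 := by linarith)
          t ht
        have hδ2 : δ ^ 2 ≤ (t - x) ^ 2 := by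
          rw [← sq_abs (t - x)]
          exact pow_le_pow_left₀ (le_of_lt hδpos) hge 2
        have hq : (t - x) ^ 2 ≤ (t - x) ^ 4 / δ ^ 2 := by
          rw [le_div_iff₀ (by positivity)]
          nlinarith [sq_nonneg (t - x)]
        have h0 : 0 ≤ ε / 4 * (t - x) ^ 2 := by positivity
        calc |E t| ≤ 2 * M0 * (t - x) ^ 2 := h
          _ ≤ 2 * M0 * ((t - x) ^ 4 / δ ^ 2) := by
              exact mul_le_mul_of_nonneg_left hq (by positivity)
          _ = C * (t - x) ^ 4 := by rw [hC]; field_simp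
          _ ≤ _ := by linarith
    obtain ⟨N, hN⟩ := exists_nat_gt (C / (ε / 2))
    refine Filter.eventually_atTop.2 ⟨max (N + 1) 4, fun n hn => ?_⟩
    have hn4 : 4 ≤ n := le_trans (le_max_right _ _) hn
    have hnN : N + 1 ≤ n := le_trans (le_max_left _ _) hn
    have hn0 : (0:ℝ) < (n : ℝ) := by exact_mod_cast (by omega : 0 < n)
    have hq0 : ∀ k ∈ range (n + 1), (0:ℝ) ≤ (n.choose k : ℝ) * x ^ k * (1 - x) ^ (n - k) := by
      intro k _
      have : (0:ℝ) ≤ 1 - x := by linarith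
      positivity
    have hmem : ∀ k ∈ range (n + 1), ((k : ℝ) / n) ∈ Set.Icc (0:ℝ) 1 := by
      intro k hk
      simp only [mem_range] at hk
      constructor
      · positivity
      · rw [div_le_one hn0]
        exact_mod_cast (by omega : k ≤ n)
    have h1 : |∑ k ∈ range (n + 1),
          E ((k : ℝ) / n) * ((n.choose k : ℝ) * x ^ k * (1 - x) ^ (n - k))|
        ≤ ∑ k ∈ range (n + 1),
          (ε / 4 * ((k : ℝ) / n - x) ^ 2 + C * ((k : ℝ) / n - x) ^ 4)
            * ((n.choose k : ℝ) * x ^ k * (1 - x) ^ (n - k)) := by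
      calc _ ≤ ∑ k ∈ range (n + 1),
            |E ((k : ℝ) / n) * ((n.choose k : ℝ) * x ^ k * (1 - x) ^ (n - k))| :=
          Finset.abs_sum_le_sum_abs _ _
        _ ≤ _ := by
          apply Finset.sum_le_sum
          intro k hk
          rw [abs_mul, abs_of_nonneg (hq0 k hk)]
          exact mul_le_mul_of_nonneg_right (hEb _ (hmem k hk)) (hq0 k hk)
    have h2 : ∑ k ∈ range (n + 1),
          (ε / 4 * ((k : ℝ) / n - x) ^ 2 + C * ((k : ℝ) / n - x) ^ 4)
            * ((n.choose k : ℝ) * x ^ k * (1 - x) ^ (n - k))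
        = ε / 4 * (∑ k ∈ range (n + 1),
            ((k : ℝ) / n - x) ^ 2 * ((n.choose k : ℝ) * x ^ k * (1 - x) ^ (n - k)))
          + C * (∑ k ∈ range (n + 1),
            ((k : ℝ) / n - x) ^ 4 * ((n.choose k : ℝ) * x ^ k * (1 - x) ^ (n - k))) := by
      rw [Finset.mul_sum, Finset.mul_sum, ← Finset.sum_add_distrib]
      exact Finset.sum_congr rfl fun k _ => by ring
    have h3 := central_two' n (by omega) x
    have h4 := central_four_le n hn4 x hx0 hx1
    have h5 : |∑ k ∈ range (n + 1),
          E ((k : ℝ) / n) * ((n.choose k : ℝ) * x ^ k * (1 - x) ^ (n - k))|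
        ≤ ε / 4 * (x * (1 - x) / n) + C * (1 / (n:ℝ) ^ 2) := by
      rw [h2, h3] at h1
      have : C * (∑ k ∈ range (n + 1),
            ((k : ℝ) / n - x) ^ 4 * ((n.choose k : ℝ) * x ^ k * (1 - x) ^ (n - k)))
          ≤ C * (1 / (n:ℝ) ^ 2) := mul_le_mul_of_nonneg_left h4 hC0
      linarith
    have hCn : C / n < ε / 2 := by
      rw [div_lt_iff₀ hn0]
      have hNn : (N : ℝ) < (n : ℝ) := by exact_mod_cast (by omega : N < n)
      have := (div_lt_iff₀ (show (0:ℝ) < ε / 2 by positivity)).mp hN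
      nlinarith
    have hRn : ‖R n‖ = (n : ℝ) * |∑ k ∈ range (n + 1),
        E ((k : ℝ) / n) * ((n.choose k : ℝ) * x ^ k * (1 - x) ^ (n - k))| := by
      rw [hRdef]
      simp only [Real.norm_eq_abs, abs_mul, abs_of_pos hn0]
    rw [hRn]
    have hfinal : (n : ℝ) * (ε / 4 * (x * (1 - x) / n) + C * (1 / (n:ℝ) ^ 2))
        = ε / 4 * (x * (1 - x)) + C / n := by
      field_simp
    calc (n : ℝ) * |∑ k ∈ range (n + 1),
          E ((k : ℝ) / n) * ((n.choose k : ℝ) * x ^ k * (1 - x) ^ (n - k))|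
        ≤ (n : ℝ) * (ε / 4 * (x * (1 - x) / n) + C * (1 / (n:ℝ) ^ 2)) :=
          mul_le_mul_of_nonneg_left h5 (le_of_lt hn0)
      _ = ε / 4 * (x * (1 - x)) + C / n := hfinal
      _ < ε := by
          have h6 : x * (1 - x) ≤ 1 := by nlinarith
          have h7 : ε / 4 * (x * (1 - x)) ≤ ε / 4 * 1 :=
            mul_le_mul_of_nonneg_left h6 (by linarith)
          linarith
  have hlim := hR.const_add (x * (1 - x) * deriv (deriv f) x / 2)
  rw [add_zero] at hlim
  apply hlim.congr'
  filter_upwards [Filter.eventually_atTop.2 ⟨4, fun n hn => hdecomp n hn⟩] with n h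
  exact h.symm
end

section
/- Let {φₖ}_{k=0}^n and {ψⱼ}_{j=0}^n be nonnegative bases for degree-n polynomials on [a,b] such that ψⱼ = ∑_{k=0}^n Mⱼₖ φₖ with all Mⱼₖ ≥ 0. Then for any polynomial p with p = ∑ⱼ dⱼ ψⱼ = ∑ₖ cₖ φₖ where cₖ = ∑ⱼ dⱼ Mⱼₖ, the condition numbers satisfy ∑ₖ |cₖ φₖ(x)| ≤ ∑ⱼ |dⱼ ψⱼ(x)| for all x ∈ [a,b]. -/
theorem condition_number_comparison
    (n : ℕ) (a b : ℝ) (φ ψ : ℕ → ℝ → ℝ) (M : ℕ → ℕ → ℝ)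
    (hφ : ∀ k, k ≤ n → ∀ x ∈ Set.Icc a b, 0 ≤ φ k x)
    (hψ : ∀ j, j ≤ n → ∀ x ∈ Set.Icc a b, 0 ≤ ψ j x)
    (hM : ∀ j k, j ≤ n → k ≤ n → 0 ≤ M j k)
    (hMψ : ∀ j, j ≤ n → ∀ x ∈ Set.Icc a b,
      ψ j x = ∑ k ∈ Finset.range (n + 1), M j k * φ k x)
    (d c : ℕ → ℝ)
    (hc : ∀ k, k ≤ n → c k = ∑ j ∈ Finset.range (n + 1), d j * M j k) :
    ∀ x ∈ Set.Icc a b,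
      ∑ k ∈ Finset.range (n + 1), |c k * φ k x| ≤
        ∑ j ∈ Finset.range (n + 1), |d j * ψ j x| := by
  intro x hx
  have key : ∑ k ∈ Finset.range (n + 1), |c k * φ k x| ≤
      ∑ k ∈ Finset.range (n + 1), ∑ j ∈ Finset.range (n + 1),
        |d j| * (M j k * φ k x) := by
    apply Finset.sum_le_sum
    intro k hk
    have hk' : k ≤ n := Nat.lt_succ_iff.mp (Finset.mem_range.mp hk)
    rw [hc k hk', Finset.sum_mul]
    refine (Finset.abs_sum_le_sum_abs _ _).trans ?_
    apply Finset.sum_le_sum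
    intro j hj
    have hj' : j ≤ n := Nat.lt_succ_iff.mp (Finset.mem_range.mp hj)
    have h1 : 0 ≤ M j k * φ k x := mul_nonneg (hM j k hj' hk') (hφ k hk' x hx)
    rw [abs_mul, abs_mul, abs_of_nonneg (hM j k hj' hk'),
      abs_of_nonneg (hφ k hk' x hx), mul_assoc]
  refine key.trans ?_
  rw [Finset.sum_comm]
  apply le_of_eq
  apply Finset.sum_congr rfl
  intro j hj
  have hj' : j ≤ n := Nat.lt_succ_iff.mp (Finset.mem_range.mp hj)
  rw [abs_mul, abs_of_nonneg (hψ j hj' x hx), hMψ j hj' x hx, Finset.mul_sum]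
end
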